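/- Let t ≥ 3 and n ≥ 2t + 17 be integers, and let H be a 3-uniform hypergraph on n vertices with minimum degree δ₁(H) ≥ g(n,t) that contains no linear path of length t + 1. Let P = (x₀, x₁, ..., x_{2t}) be a linear path of length t in H. If there are some k ∈ [0, t−1] and some ℓ ∈ {0, t} such that d_P(2k, 2k+2) > 0 and d_P(2ℓ, 2k+1) > 0, then d_P(2k, 2k+2) + d_P(2ℓ, 2k+1) ≤ 2. -/
import Mathlib


/-- The degree of a vertex `v` in a hypergraph with edge set `E`:
the number of edges containing `v`. -/
def hdegree {V : Type*} [DecidableEq V] (E : Finset (Finset V)) (v : V) : ℕ :=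
  (E.filter (fun e => v ∈ e)).card

/-- The hypergraph with edge set `E` contains a linear path of length `k`:
a collection of `k` (distinct) edges `e₁, …, e_k` such that `|eᵢ ∩ e_j| = 1`
if `|i - j| = 1` and `eᵢ ∩ e_j = ∅` otherwise. -/
def HasLinearPath {V : Type*} [DecidableEq V] (E : Finset (Finset V)) (k : ℕ) : Prop :=
  ∃ f : Fin k → Finset V, Function.Injective f ∧ (∀ i, f i ∈ E) ∧
    ∀ i j : Fin k, i ≠ j →
      (((i : ℕ) + 1 = j ∨ (j : ℕ) + 1 = i) → (f i ∩ f j).card = 1) ∧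
      (¬((i : ℕ) + 1 = j ∨ (j : ℕ) + 1 = i) → f i ∩ f j = ∅)

/-- `x = (x₀, x₁, …, x_{2t})` is a linear path of length `t` in the hypergraph with
edge set `E`: the `2t+1` vertices are distinct and `{x_{2i}, x_{2i+1}, x_{2i+2}} ∈ E`
for each `i ∈ [0, t-1]`. -/
def IsLinearPathSeq {V : Type*} [DecidableEq V] (E : Finset (Finset V)) (t : ℕ)
    (x : Fin (2 * t + 1) → V) : Prop :=
  Function.Injective x ∧
  ∀ i : Fin t,
    ({x ⟨2 * i, by have := i.isLt; omega⟩,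
      x ⟨2 * i + 1, by have := i.isLt; omega⟩,
      x ⟨2 * i + 2, by have := i.isLt; omega⟩} : Finset V) ∈ E

/-- `dP E x a b` is the number of vertices `y` outside the path `x` such that
`{x_a, x_b, y}` is an edge; this is `d_P(a, b)` in the paper. -/
def dP {V : Type*} [Fintype V] [DecidableEq V] (E : Finset (Finset V)) {t : ℕ}
    (x : Fin (2 * t + 1) → V) (a b : Fin (2 * t + 1)) : ℕ :=
  (Finset.univ.filter
    (fun y => (∀ i, y ≠ x i) ∧ ({x a, x b, y} : Finset V) ∈ E)).card

/-- The function `g(n,t)` from the paper: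
`g(n,t) = ((t-1)/2)n + (3/2)t² - (9/2)t + 6` for odd `t`, and
`g(n,t) = ((t-2)/2)n + (3/2)t² - (5/2)t + 6` for even `t`. -/
def gQ (n t : ℕ) : ℚ :=
  if Odd t then ((t : ℚ) - 1) / 2 * n + 3 / 2 * t ^ 2 - 9 / 2 * t + 6
  else ((t : ℚ) - 2) / 2 * n + 3 / 2 * t ^ 2 - 5 / 2 * t + 6


section helpers
variable {V : Type*} [DecidableEq V]

lemma inter3_empty {a b c d e f : V}
    (h : ∀ w, (w = a ∨ w = b ∨ w = c) → (w = d ∨ w = e ∨ w = f) → False) :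
    ({a, b, c} : Finset V) ∩ {d, e, f} = ∅ := by
  ext w
  simp only [Finset.mem_inter, Finset.mem_insert, Finset.mem_singleton,
    Finset.notMem_empty, iff_false, not_and]
  exact fun h1 h2 => h w h1 h2

lemma inter3_singleton {a b c d e f g : V}
    (h1 : g = a ∨ g = b ∨ g = c) (h2 : g = d ∨ g = e ∨ g = f)
    (h : ∀ w, (w = a ∨ w = b ∨ w = c) → (w = d ∨ w = e ∨ w = f) → w = g) :
    (({a, b, c} : Finset V) ∩ {d, e, f}).card = 1 := by
  have hs : ({a,b,c} : Finset V) ∩ {d,e,f} = {g} := by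
    ext w
    simp only [Finset.mem_inter, Finset.mem_insert, Finset.mem_singleton]
    constructor
    · rintro ⟨w1, w2⟩; exact h w w1 w2
    · rintro rfl; exact ⟨h1, h2⟩
  rw [hs, Finset.card_singleton]

def pathConds (E : Finset (Finset V)) (m : ℕ) (f : Fin m → Finset V) : Prop :=
  (∀ i, f i ∈ E) ∧ ∀ i j : Fin m, i ≠ j →
      (((i : ℕ) + 1 = j ∨ (j : ℕ) + 1 = i) → (f i ∩ f j).card = 1) ∧
      (¬((i : ℕ) + 1 = j ∨ (j : ℕ) + 1 = i) → f i ∩ f j = ∅)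

lemma pathConds.hasLinearPath {E : Finset (Finset V)} (hE : ∀ e ∈ E, e.card = 3)
    {m : ℕ} {f : Fin m → Finset V} (h : pathConds E m f) : HasLinearPath E m := by
  refine ⟨f, ?_, h.1, h.2⟩
  intro i j hij
  by_contra hne
  have h3 : (f i).card = 3 := hE _ (h.1 i)
  have hint : f i ∩ f j = f i := by rw [hij, Finset.inter_self]
  by_cases hadj : ((i : ℕ) + 1 = j ∨ (j : ℕ) + 1 = i)
  · have := (h.2 i j hne).1 hadj; rw [hint, h3] at this; omega
  · have := (h.2 i j hne).2 hadj; rw [hint] at this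
    rw [this] at h3; simp at h3

end helpers

lemma no_ext {V : Type*} [DecidableEq V]
    (t : ℕ) (ht : 3 ≤ t)
    (E : Finset (Finset V)) (hE : ∀ e ∈ E, e.card = 3)
    (hfree : ¬ HasLinearPath E (t + 1))
    (x : Fin (2 * t + 1) → V) (hx : IsLinearPathSeq E t x)
    (k : ℕ) (hk : k < t) (y z : V)
    (hyP : ∀ i, y ≠ x i) (hzP : ∀ i, z ≠ x i)
    (hy : ({x ⟨2*k, by omega⟩, x ⟨2*k+2, by omega⟩, y} : Finset V) ∈ E)
    (hz : ({x ⟨0, by omega⟩, x ⟨2*k+1, by omega⟩, z} : Finset V) ∈ E) :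
    y = z := by
  by_contra hyz
  set X : ℕ → V := fun i => x ⟨i % (2*t+1), Nat.mod_lt _ (by omega)⟩ with hXdef
  have hXeq : ∀ (i : ℕ) (h : i < 2*t+1), X i = x ⟨i, h⟩ := by
    intro i h
    simp only [hXdef]
    congr 1
    exact Fin.ext (Nat.mod_eq_of_lt h)
  have hne : ∀ i j : ℕ, i ≤ 2*t → j ≤ 2*t → X i = X j → i = j := by
    intro i j hi hj h
    rw [hXeq i (by omega), hXeq j (by omega)] at h
    have := congrArg Fin.val (hx.1 h)
    simpa using this
  have hyX : ∀ i, i ≤ 2*t → X i ≠ y := by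
    intro i hi h; exact hyP _ h.symm
  have hzX : ∀ i, i ≤ 2*t → X i ≠ z := by
    intro i hi h; exact hzP _ h.symm
  have hEdge : ∀ m, m < t → ({X (2*m), X (2*m+1), X (2*m+2)} : Finset V) ∈ E := by
    intro m hm
    rw [hXeq (2*m) (by omega), hXeq (2*m+1) (by omega), hXeq (2*m+2) (by omega)]
    exact hx.2 ⟨m, hm⟩
  have hy' : ({X (2*k), y, X (2*k+2)} : Finset V) ∈ E := by
    rw [hXeq (2*k) (by omega), hXeq (2*k+2) (by omega), Finset.pair_comm]
    exact hy
  have hz' : ({X 0, X (2*k+1), z} : Finset V) ∈ E := by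
    rw [hXeq 0 (by omega), hXeq (2*k+1) (by omega)]
    exact hz
  set F : ℕ → Finset V := fun a =>
    if a = 0 then {X 0, X (2*k+1), z}
    else if a = k+1 then {X (2*k), y, X (2*k+2)}
    else {X (2*a-2), X (2*a-1), X (2*a)} with hFdef
  have Fa0 : F 0 = {X 0, X (2*k+1), z} := by simp [hFdef]
  have Fak : F (k+1) = {X (2*k), y, X (2*k+2)} := by simp [hFdef]
  have Fae : ∀ a, a ≠ 0 → a ≠ k+1 → F a = {X (2*a-2), X (2*a-1), X (2*a)} := by
    intro a m1 m2; simp [hFdef, m1, m2]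
  have key : ∀ a b : ℕ, a < b → b ≤ t →
      ((a + 1 = b → (F a ∩ F b).card = 1) ∧ (a + 1 ≠ b → F a ∩ F b = ∅)) := by
    intro a b hab hbt
    have hb0 : b ≠ 0 := by omega
    by_cases ha0 : a = 0
    · subst ha0
      by_cases hbk : b = k+1
      · subst hbk
        rw [Fa0, Fak]
        constructor
        · intro hadj
          have hk0 : k = 0 := by omega
          apply inter3_singleton (g := X 0) (Or.inl rfl) (Or.inl (by rw [hk0]))
          rintro w (rfl|rfl|rfl) (h|h|h) <;>
            first
              | rfl
              | exact absurd (hne _ _ (by omega) (by omega) h) (by omega)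
              | exact absurd h (hyX _ (by omega))
              | exact absurd h.symm (hyX _ (by omega))
              | exact absurd h (hzX _ (by omega))
              | exact absurd h.symm (hzX _ (by omega))
              | exact absurd h hyz
              | exact absurd h.symm hyz
        · intro hadj
          apply inter3_empty
          rintro w (rfl|rfl|rfl) (h|h|h) <;>
            first
              | exact absurd (hne _ _ (by omega) (by omega) h) (by omega)
              | exact absurd h (hyX _ (by omega))
              | exact absurd h.symm (hyX _ (by omega))
              | exact absurd h (hzX _ (by omega))
              | exact absurd h.symm (hzX _ (by omega))
              | exact absurd h hyz
              | exact absurd h.symm hyz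
      · rw [Fa0, Fae b hb0 hbk]
        constructor
        · intro hadj
          have hb1 : b = 1 := by omega
          subst hb1
          apply inter3_singleton (g := X 0) (Or.inl rfl)
            (Or.inl (by congr 1))
          rintro w (rfl|rfl|rfl) (h|h|h) <;>
            first
              | rfl
              | exact absurd (hne _ _ (by omega) (by omega) h) (by omega)
              | exact absurd h (hyX _ (by omega))
              | exact absurd h.symm (hyX _ (by omega))
              | exact absurd h (hzX _ (by omega))
              | exact absurd h.symm (hzX _ (by omega))
              | exact absurd h hyz
              | exact absurd h.symm hyz
        · intro hadj
          apply inter3_empty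
          rintro w (rfl|rfl|rfl) (h|h|h) <;>
            first
              | exact absurd (hne _ _ (by omega) (by omega) h) (by omega)
              | exact absurd h (hyX _ (by omega))
              | exact absurd h.symm (hyX _ (by omega))
              | exact absurd h (hzX _ (by omega))
              | exact absurd h.symm (hzX _ (by omega))
              | exact absurd h hyz
              | exact absurd h.symm hyz
    · by_cases hak : a = k+1
      · subst hak
        have hbk : b ≠ k+1 := by omega
        rw [Fak, Fae b hb0 hbk]
        constructor
        · intro hadj
          apply inter3_singleton (g := X (2*k+2)) (Or.inr (Or.inr rfl))
            (Or.inl (by congr 1; omega))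
          rintro w (rfl|rfl|rfl) (h|h|h) <;>
            first
              | rfl
              | exact absurd (hne _ _ (by omega) (by omega) h) (by omega)
              | exact absurd h (hyX _ (by omega))
              | exact absurd h.symm (hyX _ (by omega))
              | exact absurd h (hzX _ (by omega))
              | exact absurd h.symm (hzX _ (by omega))
              | exact absurd h hyz
              | exact absurd h.symm hyz
        · intro hadj
          apply inter3_empty
          rintro w (rfl|rfl|rfl) (h|h|h) <;>
            first
              | exact absurd (hne _ _ (by omega) (by omega) h) (by omega)
              | exact absurd h (hyX _ (by omega))
              | exact absurd h.symm (hyX _ (by omega))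
              | exact absurd h (hzX _ (by omega))
              | exact absurd h.symm (hzX _ (by omega))
              | exact absurd h hyz
              | exact absurd h.symm hyz
      · by_cases hbk : b = k+1
        · subst hbk
          rw [Fae a ha0 hak, Fak]
          constructor
          · intro hadj
            apply inter3_singleton (g := X (2*a)) (Or.inr (Or.inr rfl))
              (Or.inl (by congr 1; omega))
            rintro w (rfl|rfl|rfl) (h|h|h) <;>
              first
                | rfl
                | exact absurd (hne _ _ (by omega) (by omega) h) (by omega)
                | exact absurd h (hyX _ (by omega))
                | exact absurd h.symm (hyX _ (by omega))
                | exact absurd h (hzX _ (by omega))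
                | exact absurd h.symm (hzX _ (by omega))
                | exact absurd h hyz
                | exact absurd h.symm hyz
          · intro hadj
            apply inter3_empty
            rintro w (rfl|rfl|rfl) (h|h|h) <;>
              first
                | exact absurd (hne _ _ (by omega) (by omega) h) (by omega)
                | exact absurd h (hyX _ (by omega))
                | exact absurd h.symm (hyX _ (by omega))
                | exact absurd h (hzX _ (by omega))
                | exact absurd h.symm (hzX _ (by omega))
                | exact absurd h hyz
                | exact absurd h.symm hyz
        · rw [Fae a ha0 hak, Fae b hb0 hbk]
          constructor
          · intro hadj
            apply inter3_singleton (g := X (2*a)) (Or.inr (Or.inr rfl))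
              (Or.inl (by congr 1; omega))
            rintro w (rfl|rfl|rfl) (h|h|h) <;>
              first
                | rfl
                | exact absurd (hne _ _ (by omega) (by omega) h) (by omega)
                | exact absurd h (hyX _ (by omega))
                | exact absurd h.symm (hyX _ (by omega))
                | exact absurd h (hzX _ (by omega))
                | exact absurd h.symm (hzX _ (by omega))
                | exact absurd h hyz
                | exact absurd h.symm hyz
          · intro hadj
            apply inter3_empty
            rintro w (rfl|rfl|rfl) (h|h|h) <;>
              first
                | exact absurd (hne _ _ (by omega) (by omega) h) (by omega)
                | exact absurd h (hyX _ (by omega))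
                | exact absurd h.symm (hyX _ (by omega))
                | exact absurd h (hzX _ (by omega))
                | exact absurd h.symm (hzX _ (by omega))
                | exact absurd h hyz
                | exact absurd h.symm hyz
  apply hfree
  apply pathConds.hasLinearPath hE (f := fun i : Fin (t+1) => F i)
  constructor
  · intro i
    show F (i : ℕ) ∈ E
    by_cases h0 : (i : ℕ) = 0
    · rw [h0, Fa0]; exact hz'
    · by_cases hk1 : (i : ℕ) = k+1
      · rw [hk1, Fak]; exact hy'
      · rw [Fae _ h0 hk1]
        have hm := hEdge ((i : ℕ) - 1) (by have := i.isLt; omega)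
        have e1 : 2*(i:ℕ)-2 = 2*((i:ℕ)-1) := by omega
        have e2 : 2*(i:ℕ)-1 = 2*((i:ℕ)-1)+1 := by omega
        have e3 : 2*(i:ℕ) = 2*((i:ℕ)-1)+2 := by omega
        rw [e1, e2, e3]; exact hm
  · intro i j hij
    have hvij : (i : ℕ) ≠ (j : ℕ) := fun h => hij (Fin.ext h)
    have hi := i.isLt
    have hj := j.isLt
    rcases lt_or_gt_of_ne hvij with h | h
    · have K := key i j h (by omega)
      exact ⟨fun hadj => K.1 (by omega), fun hadj => K.2 (by omega)⟩
    · have K := key j i h (by omega)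
      exact ⟨fun hadj => by rw [Finset.inter_comm]; exact K.1 (by omega),
             fun hadj => by rw [Finset.inter_comm]; exact K.2 (by omega)⟩


lemma no_ext_end {V : Type*} [DecidableEq V]
    (t : ℕ) (ht : 3 ≤ t)
    (E : Finset (Finset V)) (hE : ∀ e ∈ E, e.card = 3)
    (hfree : ¬ HasLinearPath E (t + 1))
    (x : Fin (2 * t + 1) → V) (hx : IsLinearPathSeq E t x)
    (k : ℕ) (hk : k < t) (y z : V)
    (hyP : ∀ i, y ≠ x i) (hzP : ∀ i, z ≠ x i)
    (hy : ({x ⟨2*k, by omega⟩, x ⟨2*k+2, by omega⟩, y} : Finset V) ∈ E)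
    (hz : ({x ⟨2*t, by omega⟩, x ⟨2*k+1, by omega⟩, z} : Finset V) ∈ E) :
    y = z := by
  have hxeq : ∀ (p q : ℕ) (hp : p < 2*t+1) (hq : q < 2*t+1), p = q →
      x ⟨p, hp⟩ = x ⟨q, hq⟩ := by
    intro p q hp hq h
    congr 1
    exact Fin.ext h
  set x' : Fin (2*t+1) → V := fun i => x ⟨2*t - i.val, by omega⟩ with hx'def
  have hx'app : ∀ (a : ℕ) (ha : a < 2*t+1) (hb : 2*t - a < 2*t+1),
      x' ⟨a, ha⟩ = x ⟨2*t - a, hb⟩ := by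
    intro a ha hb; rfl
  have hx' : IsLinearPathSeq E t x' := by
    constructor
    · intro i j h
      rw [hx'app i.val i.isLt (by omega), hx'app j.val j.isLt (by omega)] at h
      have := congrArg Fin.val (hx.1 h)
      simp only at this
      have hi := i.isLt
      have hj := j.isLt
      exact Fin.ext (by omega)
    · intro i
      have hi := i.isLt
      have hm := hx.2 ⟨t-1-i.val, by omega⟩
      simp only at hm
      rw [hx'app _ _ (by omega), hx'app _ _ (by omega), hx'app _ _ (by omega)]
      rw [hxeq (2*t - 2*i.val) (2*(t-1-i.val)+2) (by omega) (by omega) (by omega),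
          hxeq (2*t - (2*i.val+1)) (2*(t-1-i.val)+1) (by omega) (by omega) (by omega),
          hxeq (2*t - (2*i.val+2)) (2*(t-1-i.val)) (by omega) (by omega) (by omega)]
      have hswap : ({x ⟨2*(t-1-i.val)+2, by omega⟩, x ⟨2*(t-1-i.val)+1, by omega⟩,
          x ⟨2*(t-1-i.val), by omega⟩} : Finset V)
          = {x ⟨2*(t-1-i.val), by omega⟩, x ⟨2*(t-1-i.val)+1, by omega⟩,
          x ⟨2*(t-1-i.val)+2, by omega⟩} := by
        ext w
        simp only [Finset.mem_insert, Finset.mem_singleton]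
        tauto
      rw [hswap]
      exact hm
  have hyP' : ∀ i, y ≠ x' i := fun i => hyP _
  have hzP' : ∀ i, z ≠ x' i := fun i => hzP _
  apply no_ext t ht E hE hfree x' hx' (t-1-k) (by omega) y z hyP' hzP'
  · rw [hx'app _ _ (by omega), hx'app _ _ (by omega),
        hxeq (2*t - 2*(t-1-k)) (2*k+2) (by omega) (by omega) (by omega),
        hxeq (2*t - (2*(t-1-k)+2)) (2*k) (by omega) (by omega) (by omega)]
    have hswap : ({x ⟨2*k+2, by omega⟩, x ⟨2*k, by omega⟩, y} : Finset V)
        = {x ⟨2*k, by omega⟩, x ⟨2*k+2, by omega⟩, y} := by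
      ext w
      simp only [Finset.mem_insert, Finset.mem_singleton]
      tauto
    rw [hswap]
    exact hy
  · rw [hx'app _ _ (by omega), hx'app _ _ (by omega),
        hxeq (2*t - 0) (2*t) (by omega) (by omega) (by omega),
        hxeq (2*t - (2*(t-1-k)+1)) (2*k+1) (by omega) (by omega) (by omega)]
    exact hz


theorem dP_consecutive_sum_le_two
    (t n : ℕ) (ht : t ≥ 3) (hn : n ≥ 2 * t + 17)
    (V : Type*) [Fintype V] [DecidableEq V] (hV : Fintype.card V = n)
    (E : Finset (Finset V)) (hE : ∀ e ∈ E, e.card = 3)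
    (hdeg : ∀ v : V, gQ n t ≤ (hdegree E v : ℚ))
    (hfree : ¬ HasLinearPath E (t + 1))
    (x : Fin (2 * t + 1) → V) (hx : IsLinearPathSeq E t x)
    (k : ℕ) (hk : k ≤ t - 1) (l : ℕ) (hl : l = 0 ∨ l = t)
    (h1 : 0 < dP E x ⟨2 * k, by omega⟩ ⟨2 * k + 2, by omega⟩)
    (h2 : 0 < dP E x ⟨2 * l, by omega⟩ ⟨2 * k + 1, by omega⟩) :
    dP E x ⟨2 * k, by omega⟩ ⟨2 * k + 2, by omega⟩ +
      dP E x ⟨2 * l, by omega⟩ ⟨2 * k + 1, by omega⟩ ≤ 2 := by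
  have hkt : k < t := by omega
  have hxeq : ∀ (p q : ℕ) (hp : p < 2*t+1) (hq : q < 2*t+1), p = q →
      x ⟨p, hp⟩ = x ⟨q, hq⟩ := by
    intro p q hp hq h
    congr 1
    exact Fin.ext h
  have main : ∀ y' z' : V, (∀ i, y' ≠ x i) →
      ({x ⟨2*k, by omega⟩, x ⟨2*k+2, by omega⟩, y'} : Finset V) ∈ E →
      (∀ i, z' ≠ x i) →
      ({x ⟨2*l, by omega⟩, x ⟨2*k+1, by omega⟩, z'} : Finset V) ∈ E →
      y' = z' := by
    intro y' z' hyP hyE hzP hzE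
    rcases hl with rfl | hlt
    · apply no_ext t ht E hE hfree x hx k hkt y' z' hyP hzP hyE
      have e0 : x ⟨0, by omega⟩ = x ⟨2*0, by omega⟩ := hxeq _ _ _ _ (by omega)
      rw [e0]
      exact hzE
    · have e : x ⟨2*l, by omega⟩ = x ⟨2*t, by omega⟩ := hxeq _ _ _ _ (by omega)
      simp only [e] at hzE
      exact no_ext_end t ht E hE hfree x hx k hkt y' z' hyP hzP hyE hzE
  simp only [dP] at h1 h2 ⊢
  have hA := Finset.card_pos.mp h1
  rw [Finset.filter_nonempty_iff] at hA
  obtain ⟨y₀, -, hy₀⟩ := hA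
  have hB := Finset.card_pos.mp h2
  rw [Finset.filter_nonempty_iff] at hB
  obtain ⟨z₀, -, hz₀⟩ := hB
  refine le_trans (Nat.add_le_add ?_ ?_) (by norm_num : 1 + 1 ≤ 2)
  · apply Finset.card_le_one.mpr
    intro a ha b hb
    have ha' := (Finset.mem_filter.mp ha).2
    have hb' := (Finset.mem_filter.mp hb).2
    have e1 := main a z₀ ha'.1 ha'.2 hz₀.1 hz₀.2
    have e2 := main b z₀ hb'.1 hb'.2 hz₀.1 hz₀.2
    rw [e1, e2]
  · apply Finset.card_le_one.mpr
    intro a ha b hb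
    have ha' := (Finset.mem_filter.mp ha).2
    have hb' := (Finset.mem_filter.mp hb).2
    have e1 := main y₀ a hy₀.1 hy₀.2 ha'.1 ha'.2
    have e2 := main y₀ b hy₀.1 hy₀.2 hb'.1 hb'.2
    rw [← e1, ← e2]
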